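/- arXiv:1202.2640 — 3 statements merged into one kernel-verified Lean document; each statement's English description precedes it below -/
import Mathlib

section
/- For every real p ≥ 1 and all real numbers a, b, we have |a+b|^p ≤ |a|^p + |b|^p + ∑_{k=1}^{⌊p⌋} C(p,k) (|a|^k |b|^{p-k} + |b|^k |a|^{p-k}), where C(p,k) = p(p-1)⋯(p-k+1)/k! is the generalized binomial coefficient and ⌊p⌋ is the integer part of p. -/
open Finset
open scoped NNReal

/-- Generalized binomial coefficient `C(p,k) = p(p-1)⋯(p-k+1)/k!` for real `p`. -/
noncomputable def genChoose (p : ℝ) (k : ℕ) : ℝ :=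
  (∏ i ∈ Finset.range k, (p - i)) / (Nat.factorial k)

lemma genChoose_zero (p : ℝ) : genChoose p 0 = 1 := by
  simp [genChoose]

lemma genChoose_nonneg {p : ℝ} (hp : 0 ≤ p) {k : ℕ} (hk : k ≤ ⌊p⌋₊ + 1) :
    0 ≤ genChoose p k := by
  apply div_nonneg _ (by positivity)
  apply Finset.prod_nonneg
  intro i hi
  have hi' : i ≤ ⌊p⌋₊ := by
    have := Finset.mem_range.1 hi; omega
  have h1 : (i : ℝ) ≤ (⌊p⌋₊ : ℝ) := by exact_mod_cast hi'
  have h2 : (⌊p⌋₊ : ℝ) ≤ p := Nat.floor_le hp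
  linarith

/-- Pascal's rule for generalized binomial coefficients. -/
lemma genChoose_pascal (p : ℝ) (k : ℕ) :
    genChoose p (k+1) = genChoose (p-1) (k+1) + genChoose (p-1) k := by
  unfold genChoose
  rw [Finset.prod_range_succ' (fun i => p - i), Finset.prod_range_succ (fun i => p - 1 - i)]
  have hprod : (∏ i ∈ Finset.range k, (p - ((i:ℕ)+1 : ℕ))) =
      ∏ i ∈ Finset.range k, (p - 1 - i) := by
    apply Finset.prod_congr rfl
    intro i _
    push_cast
    ring
  rw [hprod]
  have hk : (Nat.factorial k : ℝ) ≠ 0 := by positivity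
  have hk1 : (Nat.factorial (k+1) : ℝ) ≠ 0 := by positivity
  rw [Nat.factorial_succ]
  push_cast
  field_simp
  ring

lemma aux_sum (f g : ℕ → ℝ) (hg0 : g 0 = f 0) (hP : ∀ k, g (k+1) = f (k+1) + f k)
    (u : ℕ → ℝ) : ∀ n : ℕ,
    ∑ k ∈ Finset.range (n+1), f k * (u k + u (k+1)) + f (n+1) * u (n+1)
      = ∑ k ∈ Finset.range (n+2), g k * u k := by
  intro n
  induction n with
  | zero =>
      simp only [Finset.sum_range_succ, Finset.sum_range_zero]
      rw [hg0, hP 0]; ring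
  | succ m ih =>
      have h2 : m + 1 + 1 = m + 2 := rfl
      rw [Finset.sum_range_succ (f := fun k => f k * (u k + u (k+1))) (n := m+1),
        Finset.sum_range_succ (f := fun k => g k * u k) (n := m+2), ← ih]
      simp only [h2]
      have h := hP (m+1)
      rw [h2] at h
      linear_combination - u (m+2) * h

/-- Key inequality: `(1+t)^p ≤ ∑_{k=0}^{⌊p⌋} C(p,k)(t^k + t^{p-k})` for `t ∈ [0,1]`. -/
lemma key_ineq : ∀ n : ℕ, ∀ p : ℝ, 0 ≤ p → ⌊p⌋₊ = n → ∀ t : ℝ, 0 ≤ t → t ≤ 1 →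
    (1 + t) ^ p ≤ ∑ k ∈ Finset.range (n+1),
      genChoose p k * (t ^ (k:ℝ) + t ^ (p - k)) := by
  intro n
  induction n with
  | zero =>
      intro p hp0 hfl t ht0 ht1
      have hp1 : p ≤ 1 := by
        by_contra h
        push_neg at h
        have : 1 ≤ ⌊p⌋₊ := Nat.le_floor (by exact_mod_cast h.le)
        omega
      have key : (1 + t) ^ p ≤ 1 + t ^ p := by
        have h := NNReal.rpow_add_le_add_rpow (1 : ℝ≥0) t.toNNReal hp0 hp1
        have h' := NNReal.coe_le_coe.2 h
        simpa [NNReal.coe_rpow, Real.coe_toNNReal t ht0] using h'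
      simp only [zero_add, Finset.sum_range_one, genChoose_zero, Nat.cast_zero,
        Real.rpow_zero, sub_zero, one_mul]
      linarith
  | succ n ih =>
      intro p hp0 hfl t ht0 ht1
      set q := p - 1 with hq
      have hpn : (n + 1 : ℝ) ≤ p := by
        have := Nat.floor_le hp0
        rw [hfl] at this
        exact_mod_cast this
      have hn0 : (0:ℝ) ≤ (n:ℝ) := Nat.cast_nonneg n
      have hp1 : (1:ℝ) ≤ p := by linarith
      have hq0 : 0 ≤ q := by rw [hq]; linarith
      have hqfl : ⌊q⌋₊ = n := by
        rw [hq, Nat.floor_sub_one, hfl]; omega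
      set u : ℕ → ℝ := fun k => t ^ (k:ℝ) with hudef
      set v : ℕ → ℝ := fun k => t ^ (p - k) with hvdef
      set f : ℕ → ℝ := fun k => genChoose q k with hfdef
      set g : ℕ → ℝ := fun k => genChoose p k with hgdef
      have hg0 : g 0 = f 0 := by simp [hgdef, hfdef, genChoose_zero]
      have hP : ∀ k, g (k+1) = f (k+1) + f k := by
        intro k
        simp only [hgdef, hfdef, hq]
        exact genChoose_pascal p k
      have hu : ∀ k : ℕ, t * u k = u (k+1) := by
        intro k
        simp only [hudef]
        rw [show ((k+1 : ℕ) : ℝ) = 1 + (k:ℝ) by push_cast; ring,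
          Real.rpow_add' ht0 (by positivity), Real.rpow_one]
      have hv : ∀ k : ℕ, k ≤ n → t * v (k+1) = v k := by
        intro k hk
        simp only [hvdef]
        have hkn : (k : ℝ) ≤ (n:ℝ) := by exact_mod_cast hk
        have hkp : (k:ℝ) + 1 ≤ p := by linarith
        have hne : 1 + (p - ((k+1:ℕ):ℝ)) ≠ 0 := by
          push_cast
          intro hcon
          nlinarith [hcon]
        rw [show p - (k:ℝ) = 1 + (p - ((k+1:ℕ):ℝ)) by push_cast; ring,
          Real.rpow_add' ht0 hne, Real.rpow_one]
      have hIH : (1 + t) ^ q ≤ ∑ k ∈ Finset.range (n+1), f k * (u k + v (k+1)) := by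
        have h := ih q hq0 hqfl t ht0 ht1
        have heq : ∑ k ∈ Finset.range (n+1), genChoose q k * (t ^ (k:ℝ) + t ^ (q - k))
            = ∑ k ∈ Finset.range (n+1), f k * (u k + v (k+1)) := by
          apply Finset.sum_congr rfl
          intro k _
          simp only [hfdef, hudef, hvdef]
          have : q - (k:ℝ) = p - ((k+1:ℕ):ℝ) := by push_cast; rw [hq]; ring
          rw [this]
        rw [← heq]
        exact h
      set S := ∑ k ∈ Finset.range (n+1), f k * (u k + v (k+1)) with hS
      have h1t : (0:ℝ) ≤ 1 + t := by linarith
      have step1 : (1 + t) ^ p ≤ S * (1 + t) := by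
        have hsplit : (1 + t) ^ p = (1 + t) ^ q * (1 + t) := by
          rw [show p = q + 1 by rw [hq]; ring, Real.rpow_add (by linarith), Real.rpow_one]
        rw [hsplit]
        exact mul_le_mul_of_nonneg_right hIH h1t
      have hid : S * (1 + t) + f (n+1) * (u (n+1) + v (n+1)) =
          ∑ k ∈ Finset.range (n+2), g k * (u k + v k) := by
        have expand : S * (1 + t) = (∑ k ∈ Finset.range (n+1), f k * (u k + u (k+1)))
            + (∑ k ∈ Finset.range (n+1), f k * (v k + v (k+1))) := by
          rw [hS, Finset.sum_mul, ← Finset.sum_add_distrib]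
          apply Finset.sum_congr rfl
          intro k hk
          have hk' : k ≤ n := by have := Finset.mem_range.1 hk; omega
          have h1 := hu k
          have h2 := hv k hk'
          linear_combination f k * h1 + f k * h2
        rw [expand]
        have A := aux_sum f g hg0 hP u n
        have B := aux_sum f g hg0 hP v n
        have hdist : ∑ k ∈ Finset.range (n+2), g k * (u k + v k) =
            (∑ k ∈ Finset.range (n+2), g k * u k) + ∑ k ∈ Finset.range (n+2), g k * v k := by
          rw [← Finset.sum_add_distrib]
          apply Finset.sum_congr rfl
          intro k _; ring
        rw [hdist, ← A, ← B]
        ring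
      have hf_nonneg : 0 ≤ f (n+1) := by
        simp only [hfdef]
        exact genChoose_nonneg hq0 (by rw [hqfl])
      have huv_nonneg : 0 ≤ u (n+1) + v (n+1) := by
        have h1 : 0 ≤ u (n+1) := by
          simp only [hudef]; exact Real.rpow_nonneg ht0 _
        have h2 : 0 ≤ v (n+1) := by
          simp only [hvdef]; exact Real.rpow_nonneg ht0 _
        linarith
      have hfinal : ∑ k ∈ Finset.range (n+2), g k * (u k + v k)
          = ∑ k ∈ Finset.range (n+1+1), genChoose p k * (t ^ (k:ℝ) + t ^ (p - k)) := by
        apply Finset.sum_congr rfl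
        intro k _
        simp only [hgdef, hudef, hvdef]
      calc (1 + t) ^ p ≤ S * (1 + t) := step1
        _ ≤ S * (1 + t) + f (n+1) * (u (n+1) + v (n+1)) := by
            nlinarith [mul_nonneg hf_nonneg huv_nonneg]
        _ = ∑ k ∈ Finset.range (n+2), g k * (u k + v k) := hid
        _ = _ := hfinal

/-- Scaled version for `0 ≤ x ≤ y`. -/
lemma scaled_ineq (p : ℝ) (hp : 0 < p) (x y : ℝ) (hx : 0 ≤ x) (hxy : x ≤ y) :
    (x + y) ^ p ≤ ∑ k ∈ Finset.range (⌊p⌋₊ + 1),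
      genChoose p k * (x ^ (k:ℝ) * y ^ (p - k) + x ^ (p - k) * y ^ (k:ℝ)) := by
  have hy : 0 ≤ y := le_trans hx hxy
  rcases eq_or_lt_of_le hy with hy0 | hy0
  · -- y = 0, hence x = 0
    have hx0 : x = 0 := le_antisymm (by linarith) hx
    rw [hx0, ← hy0, add_zero, Real.zero_rpow hp.ne']
    apply Finset.sum_nonneg
    intro k hk
    have hk' : k ≤ ⌊p⌋₊ + 1 := by have := Finset.mem_range.1 hk; omega
    apply mul_nonneg (genChoose_nonneg hp.le hk')
    have := Real.rpow_nonneg (le_refl (0:ℝ)) ((k:ℕ):ℝ)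
    positivity
  · set t := x / y with ht
    have ht0 : 0 ≤ t := div_nonneg hx hy
    have ht1 : t ≤ 1 := (div_le_one hy0).2 hxy
    have hxy' : x + y = y * (1 + t) := by
      field_simp [ht]
      have hyt : y * t = x := by rw [ht]; field_simp
      linarith
    have hkey := key_ineq ⌊p⌋₊ p hp.le rfl t ht0 ht1
    have hsplit : (x + y) ^ p = y ^ p * (1 + t) ^ p := by
      rw [hxy', Real.mul_rpow hy (by linarith)]
    rw [hsplit]
    have hyp : 0 ≤ y ^ p := Real.rpow_nonneg hy p
    calc y ^ p * (1 + t) ^ p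
        ≤ y ^ p * ∑ k ∈ Finset.range (⌊p⌋₊ + 1), genChoose p k * (t ^ (k:ℝ) + t ^ (p - k)) :=
          mul_le_mul_of_nonneg_left hkey hyp
      _ = ∑ k ∈ Finset.range (⌊p⌋₊ + 1),
            genChoose p k * (x ^ (k:ℝ) * y ^ (p - k) + x ^ (p - k) * y ^ (k:ℝ)) := by
          rw [Finset.mul_sum]
          apply Finset.sum_congr rfl
          intro k _
          have hty1 : y ^ p * t ^ (k:ℝ) = x ^ (k:ℝ) * y ^ (p - k) := by
            rw [ht, Real.div_rpow hx hy, Real.rpow_sub hy0]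
            field_simp
          have hty2 : y ^ p * t ^ (p - k) = x ^ (p - k) * y ^ (k:ℝ) := by
            rw [ht, Real.div_rpow hx hy, Real.rpow_sub hy0]
            have hyk : y ^ ((k:ℕ):ℝ) ≠ 0 := by
              exact (Real.rpow_pos_of_pos hy0 _).ne'
            have hypk : y ^ (p - (k:ℕ)) ≠ 0 := (Real.rpow_pos_of_pos hy0 _).ne'
            field_simp
          linear_combination genChoose p k * hty1 + genChoose p k * hty2

/-- Symmetric version without ordering assumption. -/
lemma scaled_ineq' (p : ℝ) (hp : 0 < p) (x y : ℝ) (hx : 0 ≤ x) (hy : 0 ≤ y) :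
    (x + y) ^ p ≤ ∑ k ∈ Finset.range (⌊p⌋₊ + 1),
      genChoose p k * (x ^ (k:ℝ) * y ^ (p - k) + x ^ (p - k) * y ^ (k:ℝ)) := by
  rcases le_total x y with h | h
  · exact scaled_ineq p hp x y hx h
  · have := scaled_ineq p hp y x hy h
    rw [add_comm y x] at this
    calc (x + y) ^ p ≤ ∑ k ∈ Finset.range (⌊p⌋₊ + 1),
          genChoose p k * (y ^ (k:ℝ) * x ^ (p - k) + y ^ (p - k) * x ^ (k:ℝ)) := this
      _ = _ := by
          apply Finset.sum_congr rfl
          intro k _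
          ring

/-- Inequality (26) of Berkes–Hörmann–Schauer: for real `p ≥ 1` and reals `a, b`,
`|a+b|^p ≤ |a|^p + |b|^p + ∑_{k=1}^{⌊p⌋} C(p,k)(|a|^k |b|^{p-k} + |b|^k |a|^{p-k})`. -/
theorem stmt_1 (p : ℝ) (hp : 1 ≤ p) (a b : ℝ) :
    |a + b| ^ p ≤ |a| ^ p + |b| ^ p +
      ∑ k ∈ Finset.Icc 1 ⌊p⌋₊, genChoose p k *
        (|a| ^ (k : ℝ) * |b| ^ (p - k) + |b| ^ (k : ℝ) * |a| ^ (p - k)) := by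
  have hp0 : 0 < p := by linarith
  have h1 : |a + b| ^ p ≤ (|a| + |b|) ^ p :=
    Real.rpow_le_rpow (abs_nonneg _) (abs_add_le a b) hp0.le
  have h2 := scaled_ineq' p hp0 |a| |b| (abs_nonneg a) (abs_nonneg b)
  -- split the range sum
  have hsplit : ∑ k ∈ Finset.range (⌊p⌋₊ + 1),
      genChoose p k * (|a| ^ (k:ℝ) * |b| ^ (p - k) + |a| ^ (p - k) * |b| ^ (k:ℝ))
      = |a| ^ p + |b| ^ p +
      ∑ k ∈ Finset.Icc 1 ⌊p⌋₊, genChoose p k *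
        (|a| ^ (k : ℝ) * |b| ^ (p - k) + |b| ^ (k : ℝ) * |a| ^ (p - k)) := by
    rw [Finset.sum_range_succ'
      (f := fun k => genChoose p k * (|a| ^ (k:ℝ) * |b| ^ (p - k) + |a| ^ (p - k) * |b| ^ (k:ℝ)))]
    have hzero : genChoose p 0 * (|a| ^ ((0:ℕ):ℝ) * |b| ^ (p - (0:ℕ)) +
        |a| ^ (p - (0:ℕ)) * |b| ^ ((0:ℕ):ℝ)) = |a| ^ p + |b| ^ p := by
      rw [genChoose_zero]
      push_cast
      rw [Real.rpow_zero, Real.rpow_zero, sub_zero]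
      ring
    rw [hzero]
    rw [add_comm]
    congr 1
    have hIcc : Finset.Icc 1 ⌊p⌋₊ = Finset.Ico 1 (⌊p⌋₊ + 1) := by
      rw [Finset.Ico_add_one_right_eq_Icc]
    rw [hIcc, Finset.sum_Ico_eq_sum_range]
    simp only [Nat.add_sub_cancel]
    apply Finset.sum_congr rfl
    intro k _
    have : 1 + k = k + 1 := by omega
    rw [this]
    ring
  rw [← hsplit]
  exact le_trans h1 h2
end

section
/- For every real p ≥ 1 and every x ∈ [0,1], (1+x)^p ≤ ∑_{k=0}^{⌊p⌋+1} C(p,k) x^k, where C(p,k) is the generalized binomial coefficient. -/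
open Finset

lemma hasDerivAt_one_add_rpow (q : ℝ) {t : ℝ} (ht : -1 < t) :
    HasDerivAt (fun s : ℝ => (1 + s) ^ q) (q * (1 + t) ^ (q - 1)) t := by
  have h1 : HasDerivAt (fun s : ℝ => 1 + s) 1 t := by
    simpa using (hasDerivAt_id t).const_add (1 : ℝ)
  have h2 := (Real.hasDerivAt_rpow_const (x := 1 + t) (p := q)
    (Or.inl (by linarith))).comp t h1
  simpa [Function.comp_def] using h2

lemma iter_deriv_aux (p : ℝ) {x : ℝ} (hx : 0 < x) (hx1 : x ≤ 1) (k : ℕ) :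
    ∀ t ∈ Set.Icc (0:ℝ) x, iteratedDerivWithin k (fun t : ℝ => (1 + t) ^ p) (Set.Icc 0 x) t
      = (∏ i ∈ Finset.range k, (p - i)) * (1 + t) ^ (p - k) := by
  induction k with
  | zero => intro t ht; simp
  | succ k ih =>
    intro t ht
    have huniq : UniqueDiffWithinAt ℝ (Set.Icc (0:ℝ) x) t := (uniqueDiffOn_Icc hx) t ht
    have ht' : -1 < t := by have := ht.1; linarith
    rw [iteratedDerivWithin_succ,
      derivWithin_congr ih (ih t ht)]
    have hg : HasDerivAt (fun s : ℝ => (∏ i ∈ Finset.range k, (p - i)) * (1 + s) ^ (p - k))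
        ((∏ i ∈ Finset.range k, (p - i)) * ((p - k) * (1 + t) ^ (p - k - 1))) t :=
      (hasDerivAt_one_add_rpow (p - k) ht').const_mul _
    rw [hg.hasDerivWithinAt.derivWithin huniq, Finset.prod_range_succ]
    push_cast
    rw [show p - ((k:ℝ) + 1) = p - k - 1 from by ring]
    ring

/-- For real `p ≥ 1` and `x ∈ [0,1]`, `(1+x)^p ≤ ∑_{k=0}^{⌊p⌋+1} C(p,k) x^k`. -/
theorem stmt_2 (p : ℝ) (hp : 1 ≤ p) (x : ℝ) (hx : x ∈ Set.Icc (0 : ℝ) 1) :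
    (1 + x) ^ p ≤ ∑ k ∈ Finset.range (⌊p⌋₊ + 2), genChoose p k * x ^ k := by
  obtain ⟨hx0, hx1⟩ := hx
  rcases eq_or_lt_of_le hx0 with rfl | hxpos
  · simp [genChoose, Finset.sum_range_succ']
  set n : ℕ := ⌊p⌋₊ + 1 with hn
  set f : ℝ → ℝ := fun t => (1 + t) ^ p with hf_def
  have hcd : ContDiffOn ℝ n f (Set.Icc 0 x) := by
    intro t ht
    have ht' : (1 : ℝ) + t ≠ 0 := by have := ht.1; positivity
    exact (((contDiff_const.add contDiff_id).contDiffAt).rpow_const_of_ne ht').contDiffWithinAt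
  have hiter := iter_deriv_aux p hxpos hx1
  have hdiff : DifferentiableOn ℝ (iteratedDerivWithin n f (Set.Icc 0 x)) (Set.Ioo 0 x) := by
    have hgd : DifferentiableOn ℝ
        (fun t => (∏ i ∈ Finset.range n, (p - (i:ℝ))) * (1 + t) ^ (p - (n:ℕ))) (Set.Ioo 0 x) := by
      intro t ht
      have ht' : -1 < t := by have := ht.1.le; linarith [ht.1]
      exact (((hasDerivAt_one_add_rpow (p - n) ht').const_mul
        _).differentiableAt).differentiableWithinAt
    exact hgd.congr fun t ht => hiter n t (Set.mem_Icc_of_Ioo ht)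
  obtain ⟨ξ, hξ, hrem⟩ := taylor_mean_remainder_lagrange hxpos.ne
    (by rwa [Set.uIcc_of_le hxpos.le]) (by rwa [Set.uIcc_of_le hxpos.le, Set.uIoo_of_le hxpos.le])
  rw [Set.uIcc_of_le hxpos.le] at hrem
  rw [Set.uIoo_of_le hxpos.le] at hξ
  have htay : taylorWithinEval f n (Set.Icc 0 x) 0 x
      = ∑ k ∈ Finset.range (⌊p⌋₊ + 2), genChoose p k * x ^ k := by
    rw [taylor_within_apply]
    refine Finset.sum_congr rfl fun k hk => ?_
    rw [hiter k 0 (Set.left_mem_Icc.mpr hxpos.le)]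
    simp [genChoose, Real.rpow_natCast]
    ring
  have hprodle : (∏ i ∈ Finset.range (n + 1), (p - i)) ≤ 0 := by
    rw [Finset.prod_range_succ]
    have h1 : 0 ≤ ∏ i ∈ Finset.range n, (p - i) := by
      apply Finset.prod_nonneg
      intro i hi
      have hi' : i ≤ ⌊p⌋₊ := by
        have := Finset.mem_range.mp hi
        omega
      have : (i : ℝ) ≤ ⌊p⌋₊ := by exact_mod_cast hi'
      have hfl : (⌊p⌋₊ : ℝ) ≤ p := Nat.floor_le (by linarith)
      linarith
    have h2 : p - n ≤ 0 := by
      have := Nat.lt_floor_add_one p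
      have : p < (n : ℝ) := by push_cast [hn]; push_cast at this; linarith
      linarith
    exact mul_nonpos_of_nonneg_of_nonpos h1 h2
  have hremle : iteratedDerivWithin (n + 1) f (Set.Icc 0 x) ξ * (x - 0) ^ (n + 1) / ((n + 1).factorial : ℝ) ≤ 0 := by
    rw [hiter (n + 1) ξ (Set.mem_Icc_of_Ioo hξ)]
    have hξ0 : (0:ℝ) < 1 + ξ := by have := hξ.1; linarith
    have hpow : (0:ℝ) < (1 + ξ) ^ (p - (n + 1 : ℕ)) := Real.rpow_pos_of_pos hξ0 _
    have hmul : (∏ i ∈ Finset.range (n + 1), (p - i)) * (1 + ξ) ^ (p - (n + 1 : ℕ)) ≤ 0 :=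
      mul_nonpos_of_nonpos_of_nonneg hprodle hpow.le
    have hxp : (0:ℝ) ≤ (x - 0) ^ (n + 1) := by rw [sub_zero]; positivity
    have hfac : (0:ℝ) < ((n + 1).factorial : ℝ) := by positivity
    exact div_nonpos_of_nonpos_of_nonneg (mul_nonpos_of_nonpos_of_nonneg hmul hxp) hfac.le
  have : f x ≤ taylorWithinEval f n (Set.Icc 0 x) 0 x := by linarith
  rw [htay] at this
  exact this
end

section
/- Let {Y_k : k ∈ ℤ} be a centered stationary sequence of real random variables that is weakly M-dependent in L² with rate function δ, i.e., for each k and m there exists a random variable Y_k^{(m)} with ‖Y_k − Y_k^{(m)}‖₂ ≤ δ(m), and for disjoint intervals of integers at mutual distance exceeding the corresponding m-parameters the associated approximating vectors are independent. Then for every k ∈ ℤ and j ≥ 1, |E[Y_k Y_{k+j}]| ≤ (2‖Y_1‖₂ + D₂) δ(j−1), where D₂ = ∑_{m=0}^∞ δ(m) (assumed finite). -/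
open MeasureTheory ProbabilityTheory
open scoped ENNReal

lemma two_halves_aux : (1 : ℝ≥0∞) / 1 = 1 / 2 + 1 / 2 := by
  rw [ENNReal.div_add_div_same, one_div_one, one_add_one_eq_two, ENNReal.div_self two_ne_zero ENNReal.ofNat_ne_top]

lemma int_mul_aux {Ω : Type*} [MeasureSpace Ω] {f g : Ω → ℝ}
    (hf : MemLp f 2 ℙ) (hg : MemLp g 2 ℙ) :
    Integrable (fun ω => f ω * g ω) ℙ := by
  refine memLp_one_iff_integrable.mp ?_
  have := hg.smul (φ := f) hf (r := 1)
  exact this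

lemma cs_aux {Ω : Type*} [MeasureSpace Ω] (f g : Ω → ℝ)
    (hf : MemLp f 2 ℙ) (hg : MemLp g 2 ℙ) :
    |∫ ω, f ω * g ω ∂ℙ| ≤ (eLpNorm f 2 ℙ).toReal * (eLpNorm g 2 ℙ).toReal := by
  have hpqr := two_halves_aux
  have hint : Integrable (fun ω => f ω * g ω) ℙ := int_mul_aux hf hg
  have h1 : |∫ ω, f ω * g ω ∂ℙ| ≤ ∫ ω, ‖f ω * g ω‖ ∂ℙ := by
    simpa using norm_integral_le_integral_norm (fun ω => f ω * g ω) (μ := ℙ)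
  have h2 : ∫ ω, ‖f ω * g ω‖ ∂ℙ = (eLpNorm (fun ω => f ω * g ω) 1 ℙ).toReal := by
    rw [integral_norm_eq_lintegral_enorm hint.aestronglyMeasurable,
      eLpNorm_one_eq_lintegral_enorm]
  have h3 : eLpNorm (fun ω => f ω * g ω) 1 ℙ ≤ eLpNorm f 2 ℙ * eLpNorm g 2 ℙ := by
    simpa using eLpNorm_le_eLpNorm_mul_eLpNorm'_of_norm hf.aestronglyMeasurable hg.aestronglyMeasurable
      (· * ·) 1 (Filter.Eventually.of_forall fun x => by simp [abs_mul]) (p := 2) (q := 2) (r := 1)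
  have hfin : eLpNorm f 2 ℙ * eLpNorm g 2 ℙ ≠ ⊤ :=
    ENNReal.mul_ne_top hf.eLpNorm_ne_top hg.eLpNorm_ne_top
  calc |∫ ω, f ω * g ω ∂ℙ| ≤ (eLpNorm (fun ω => f ω * g ω) 1 ℙ).toReal := h1.trans_eq h2
    _ ≤ (eLpNorm f 2 ℙ * eLpNorm g 2 ℙ).toReal := ENNReal.toReal_mono hfin h3
    _ = (eLpNorm f 2 ℙ).toReal * (eLpNorm g 2 ℙ).toReal := ENNReal.toReal_mul

/-- Covariance bound for weakly M-dependent sequences: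
`|E[Y_k Y_{k+j}]| ≤ (2‖Y₁‖₂ + D₂) δ(j-1)` for `j ≥ 1`. -/
theorem stmt_4 {Ω : Type*} [MeasureSpace Ω] [IsProbabilityMeasure (ℙ : Measure Ω)]
    (Y : ℤ → Ω → ℝ) (Yapp : ℤ → ℕ → Ω → ℝ) (δ : ℕ → ℝ) (D₂ : ℝ)
    (hmem : ∀ k, MemLp (Y k) 2 ℙ)
    (hmemapp : ∀ k m, MemLp (Yapp k m) 2 ℙ)
    (hcent : ∀ k, ∫ ω, Y k ω ∂ℙ = 0)
    (hcentapp : ∀ k m, ∫ ω, Yapp k m ω ∂ℙ = 0)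
    (hstat : ∀ k, eLpNorm (Y k) 2 ℙ = eLpNorm (Y 1) 2 ℙ)
    (happrox : ∀ k m, (eLpNorm (fun ω => Y k ω - Yapp k m ω) 2 ℙ).toReal ≤ δ m)
    (hindep : ∀ k l : ℤ, ∀ m m' : ℕ, ((max m m' : ℕ) : ℤ) < |k - l| →
      IndepFun (Yapp k m) (Yapp l m') ℙ)
    (hD : HasSum δ D₂)
    (k : ℤ) (j : ℕ) (hj : 1 ≤ j) :
    |∫ ω, Y k ω * Y (k + j) ω ∂ℙ| ≤
      (2 * (eLpNorm (Y 1) 2 ℙ).toReal + D₂) * δ (j - 1) := by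
  set m := j - 1 with hm
  set A := Yapp k m
  set B := Yapp (k + j) m
  set Y' := Y (k + j)
  have hδnonneg : ∀ n, 0 ≤ δ n := fun n =>
    le_trans ENNReal.toReal_nonneg (happrox k n)
  have hδD : δ m ≤ D₂ := le_hasSum hD m fun i _ => hδnonneg i
  have hmA : MemLp A 2 ℙ := hmemapp k m
  have hmB : MemLp B 2 ℙ := hmemapp (k + j) m
  have hmY' : MemLp Y' 2 ℙ := hmem (k + j)
  have hmYk : MemLp (Y k) 2 ℙ := hmem k
  have hm1 : MemLp (fun ω => Y k ω - A ω) 2 ℙ := hmYk.sub hmA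
  have hm2 : MemLp (fun ω => Y' ω - B ω) 2 ℙ := hmY'.sub hmB
  -- independence term
  have hind : IndepFun A B ℙ := by
    apply hindep k (k + j) m m
    have : |k - (k + j)| = (j : ℤ) := by
      rw [abs_sub_comm]; simp
    rw [this, max_self]
    exact_mod_cast Nat.sub_lt (by omega) one_pos
  have hABint : ∫ ω, A ω * B ω ∂ℙ = 0 := by
    have h := hind.integral_mul_eq_mul_integral (hmA.integrable one_le_two).aestronglyMeasurable
      (hmB.integrable one_le_two).aestronglyMeasurable
    have h2 : integral ℙ (A * B) = 0 := by rw [h, hcentapp k m, zero_mul]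
    exact h2
  -- decomposition
  have hdecomp : ∀ ω, Y k ω * Y' ω =
      (Y k ω - A ω) * Y' ω + A ω * (Y' ω - B ω) + A ω * B ω := by
    intro ω; ring
  have hint1 : Integrable (fun ω => (Y k ω - A ω) * Y' ω) ℙ := int_mul_aux hm1 hmY'
  have hint2 : Integrable (fun ω => A ω * (Y' ω - B ω)) ℙ := int_mul_aux hmA hm2
  have hint3 : Integrable (fun ω => A ω * B ω) ℙ := int_mul_aux hmA hmB
  have hsplit : ∫ ω, Y k ω * Y' ω ∂ℙ =
      (∫ ω, (Y k ω - A ω) * Y' ω ∂ℙ) + (∫ ω, A ω * (Y' ω - B ω) ∂ℙ)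
        + ∫ ω, A ω * B ω ∂ℙ := by
    calc ∫ ω, Y k ω * Y' ω ∂ℙ
        = ∫ ω, ((Y k ω - A ω) * Y' ω + A ω * (Y' ω - B ω)) + A ω * B ω ∂ℙ :=
          integral_congr_ae (Filter.Eventually.of_forall fun ω => by
            simpa [add_assoc] using hdecomp ω)
      _ = (∫ ω, (Y k ω - A ω) * Y' ω + A ω * (Y' ω - B ω) ∂ℙ) + ∫ ω, A ω * B ω ∂ℙ :=
          integral_add (hint1.add hint2) hint3
      _ = _ := by rw [integral_add hint1 hint2]
  -- bounds
  have hb1 : |∫ ω, (Y k ω - A ω) * Y' ω ∂ℙ| ≤ δ m * (eLpNorm (Y 1) 2 ℙ).toReal := by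
    calc |∫ ω, (Y k ω - A ω) * Y' ω ∂ℙ|
        ≤ (eLpNorm (fun ω => Y k ω - A ω) 2 ℙ).toReal * (eLpNorm Y' 2 ℙ).toReal :=
          cs_aux _ _ hm1 hmY'
      _ ≤ δ m * (eLpNorm (Y 1) 2 ℙ).toReal := by
          rw [hstat (k + j)]
          exact mul_le_mul_of_nonneg_right (happrox k m) ENNReal.toReal_nonneg
  have hAnorm : (eLpNorm A 2 ℙ).toReal ≤ (eLpNorm (Y 1) 2 ℙ).toReal + δ m := by
    have htri : eLpNorm A 2 ℙ ≤ eLpNorm (Y k) 2 ℙ + eLpNorm (fun ω => Y k ω - A ω) 2 ℙ := by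
      have : A = fun ω => Y k ω - (Y k ω - A ω) := by funext ω; ring
      calc eLpNorm A 2 ℙ = eLpNorm (fun ω => Y k ω - (Y k ω - A ω)) 2 ℙ := by rw [← this]
        _ ≤ _ := eLpNorm_sub_le hmYk.aestronglyMeasurable
            (hm1.aestronglyMeasurable) one_le_two
    have hfin : eLpNorm (Y k) 2 ℙ + eLpNorm (fun ω => Y k ω - A ω) 2 ℙ ≠ ⊤ :=
      ENNReal.add_ne_top.mpr ⟨hmYk.eLpNorm_ne_top, hm1.eLpNorm_ne_top⟩
    calc (eLpNorm A 2 ℙ).toReal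
        ≤ (eLpNorm (Y k) 2 ℙ + eLpNorm (fun ω => Y k ω - A ω) 2 ℙ).toReal :=
          ENNReal.toReal_mono hfin htri
      _ = (eLpNorm (Y k) 2 ℙ).toReal + (eLpNorm (fun ω => Y k ω - A ω) 2 ℙ).toReal :=
          ENNReal.toReal_add hmYk.eLpNorm_ne_top hm1.eLpNorm_ne_top
      _ ≤ (eLpNorm (Y 1) 2 ℙ).toReal + δ m := by
          rw [hstat k]; exact add_le_add_right (happrox k m) _
  have hb2 : |∫ ω, A ω * (Y' ω - B ω) ∂ℙ| ≤ ((eLpNorm (Y 1) 2 ℙ).toReal + δ m) * δ m := by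
    calc |∫ ω, A ω * (Y' ω - B ω) ∂ℙ|
        ≤ (eLpNorm A 2 ℙ).toReal * (eLpNorm (fun ω => Y' ω - B ω) 2 ℙ).toReal :=
          cs_aux _ _ hmA hm2
      _ ≤ ((eLpNorm (Y 1) 2 ℙ).toReal + δ m) * δ m :=
          mul_le_mul hAnorm (happrox (k + j) m) ENNReal.toReal_nonneg
            (add_nonneg ENNReal.toReal_nonneg (hδnonneg m))
  have hY1nonneg : (0:ℝ) ≤ (eLpNorm (Y 1) 2 ℙ).toReal := ENNReal.toReal_nonneg
  calc |∫ ω, Y k ω * Y' ω ∂ℙ|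
      ≤ |∫ ω, (Y k ω - A ω) * Y' ω ∂ℙ| + |∫ ω, A ω * (Y' ω - B ω) ∂ℙ|
        + |∫ ω, A ω * B ω ∂ℙ| := by
        rw [hsplit]; exact (abs_add_le _ _).trans (add_le_add_left (abs_add_le _ _) _)
    _ ≤ δ m * (eLpNorm (Y 1) 2 ℙ).toReal + ((eLpNorm (Y 1) 2 ℙ).toReal + δ m) * δ m + 0 := by
        rw [hABint, abs_zero]
        exact add_le_add (add_le_add hb1 hb2) le_rfl
    _ ≤ (2 * (eLpNorm (Y 1) 2 ℙ).toReal + D₂) * δ m := by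
        nlinarith [hδnonneg m, hδD, hY1nonneg]
end
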